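/- The coefficient of q in the generalized chromatic polynomial of the complete graph K_n with multiplicities k = (k_1, ..., k_n), all k_i positive, has absolute value equal to (k_1 + ··· + k_n - 1)! / (k_1! ··· k_n!). -/

import Mathlib

set_option maxHeartbeats 1000000

open Finset Polynomial

private lemma key_count (n : ℕ) (k : Fin n → ℕ) (q : ℕ) :
    Nat.card {τ : Fin n → Finset (Fin q) //
        (∀ i, (τ i).card = k i) ∧ ∀ i j : Fin n, i ≠ j → Disjoint (τ i) (τ j)} *
      ∏ i, Nat.factorial (k i) = q.descFactorial (∑ i, k i) := by
  classical
  set A := {τ : Fin n → Finset (Fin q) //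
        (∀ i, (τ i).card = k i) ∧ ∀ i j : Fin n, i ≠ j → Disjoint (τ i) (τ j)} with hA
  set E := ((i : Fin n) × Fin (k i)) ↪ Fin q with hE
  -- the map sending an embedding to its tuple of images
  have himg : ∀ f : E, ∀ i, (Finset.univ.image (fun a : Fin (k i) => f ⟨i, a⟩)).card = k i := by
    intro f i
    rw [Finset.card_image_of_injective _ (fun a b h => by
      have := f.injective h
      exact (Sigma.mk.inj_iff.mp this).2.eq)]
    simp
  have hdisj : ∀ f : E, ∀ i j : Fin n, i ≠ j →
      Disjoint (Finset.univ.image (fun a : Fin (k i) => f ⟨i, a⟩))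
        (Finset.univ.image (fun a : Fin (k j) => f ⟨j, a⟩)) := by
    intro f i j hij
    rw [Finset.disjoint_left]
    rintro x hx hy
    obtain ⟨a, -, ha⟩ := Finset.mem_image.mp hx
    obtain ⟨b, -, hb⟩ := Finset.mem_image.mp hy
    have := f.injective (ha.trans hb.symm)
    exact hij (Sigma.mk.inj_iff.mp this).1
  let Φ : E → A := fun f =>
    ⟨fun i => Finset.univ.image (fun a : Fin (k i) => f ⟨i, a⟩), himg f, hdisj f⟩
  -- fibers of Φ
  have hfiber : ∀ τ : A, Nat.card {f : E // Φ f = τ} = ∏ i, Nat.factorial (k i) := by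
    intro τ
    have hcard : ∀ i, Fintype.card (↥(τ.1 i)) = k i := by
      intro i; rw [Fintype.card_coe]; exact τ.2.1 i
    have hΨ : ∀ e : (i : Fin n) → (Fin (k i) ≃ ↥(τ.1 i)),
        Function.Injective (fun p : (i : Fin n) × Fin (k i) => ((e p.1 p.2 : ↥(τ.1 p.1)) : Fin q)) := by
      intro e
      rintro ⟨i, a⟩ ⟨j, b⟩ h
      by_cases hij : i = j
      · subst hij
        have : e i a = e i b := Subtype.ext h
        rw [(e i).injective this]
      · exfalso
        have h' : ((e i a : ↥(τ.1 i)) : Fin q) = ((e j b : ↥(τ.1 j)) : Fin q) := h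
        have h2 : ((e i a : ↥(τ.1 i)) : Fin q) ∈ τ.1 j := by rw [h']; exact (e j b).2
        exact Finset.disjoint_left.mp (τ.2.2 i j hij) (e i a).2 h2
    let Ψ : ((i : Fin n) → (Fin (k i) ≃ ↥(τ.1 i))) → {f : E // Φ f = τ} := fun e =>
      ⟨⟨fun p => ((e p.1 p.2 : ↥(τ.1 p.1)) : Fin q), hΨ e⟩, by
        apply Subtype.ext
        funext i
        apply Finset.ext
        intro x
        simp only [Φ, Finset.mem_image, Finset.mem_univ, true_and]
        constructor
        · rintro ⟨a, rfl⟩; exact (e i a).2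
        · intro hx
          refine ⟨(e i).symm ⟨x, hx⟩, ?_⟩
          show ((e i ((e i).symm ⟨x, hx⟩) : ↥(τ.1 i)) : Fin q) = x
          rw [Equiv.apply_symm_apply]⟩
    have hbij : Function.Bijective Ψ := by
      constructor
      · intro e e' h
        funext i
        apply Equiv.ext
        intro a
        apply Subtype.ext
        exact congrFun (congrArg (fun f : {f : E // Φ f = τ} => (f.1 : ((i : Fin n) × Fin (k i)) → Fin q)) h) ⟨i, a⟩
      · rintro ⟨f, hf⟩
        have hmem : ∀ i (a : Fin (k i)), f ⟨i, a⟩ ∈ τ.1 i := by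
          intro i a
          rw [← hf]
          exact Finset.mem_image.mpr ⟨a, Finset.mem_univ _, rfl⟩
        have hinj : ∀ i, Function.Injective (fun a : Fin (k i) => (⟨f ⟨i, a⟩, hmem i a⟩ : ↥(τ.1 i))) := by
          intro i a b h
          have := f.injective (congrArg Subtype.val h)
          exact (Sigma.mk.inj_iff.mp this).2.eq
        have hbij' : ∀ i, Function.Bijective (fun a : Fin (k i) => (⟨f ⟨i, a⟩, hmem i a⟩ : ↥(τ.1 i))) := by
          intro i
          rw [Fintype.bijective_iff_injective_and_card]
          exact ⟨hinj i, by rw [hcard i, Fintype.card_fin]⟩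
        refine ⟨fun i => Equiv.ofBijective _ (hbij' i), ?_⟩
        apply Subtype.ext
        apply Function.Embedding.ext
        rintro ⟨i, a⟩
        rfl
    rw [← Nat.card_congr (Equiv.ofBijective Ψ hbij), Nat.card_pi]
    refine Finset.prod_congr rfl fun i _ => ?_
    rw [Nat.card_eq_fintype_card, Fintype.card_equiv (Fintype.equivOfCardEq (by
      rw [Fintype.card_fin, hcard i])), Fintype.card_fin]
  -- total count
  have htot : Nat.card E = q.descFactorial (∑ i, k i) := by
    rw [Nat.card_eq_fintype_card, Fintype.card_embedding_eq, Fintype.card_fin]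
    congr 1
    simp
  letI : Fintype A := Fintype.ofFinite A
  letI : ∀ τ : A, Fintype {f : E // Φ f = τ} := fun τ => Fintype.ofFinite _
  calc Nat.card A * ∏ i, Nat.factorial (k i)
      = ∑ τ : A, Nat.card {f : E // Φ f = τ} := by
        rw [Finset.sum_congr rfl (fun τ _ => hfiber τ), Finset.sum_const, smul_eq_mul,
          Finset.card_univ, Nat.card_eq_fintype_card]
    _ = Fintype.card ((y : A) × {x : E // Φ x = y}) := by
        rw [Fintype.card_sigma]
        exact Finset.sum_congr rfl fun τ _ => Nat.card_eq_fintype_card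
    _ = Nat.card E := by
        rw [← Nat.card_eq_fintype_card]
        exact Nat.card_congr (Equiv.sigmaFiberEquiv Φ)
    _ = q.descFactorial (∑ i, k i) := htot

private lemma descPoch_eval_neg_one (m : ℕ) :
    (descPochhammer ℚ m).eval (-1) = (-1) ^ m * m.factorial := by
  induction m with
  | zero => simp
  | succ m ih =>
    rw [descPochhammer_succ_right, eval_mul, eval_sub, eval_X, eval_natCast, ih,
      Nat.factorial_succ]
    push_cast
    ring

theorem stmt1 (n : ℕ) (hn : 0 < n) (k : Fin n → ℕ) (hk : ∀ i, 0 < k i)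
    (P : Polynomial ℚ)
    (hP : ∀ q : ℕ, P.eval (q : ℚ) =
      Nat.card {τ : Fin n → Finset (Fin q) //
        (∀ i, (τ i).card = k i) ∧ ∀ i j : Fin n, i ≠ j → Disjoint (τ i) (τ j)}) :
    |P.coeff 1| = ((Nat.factorial ((∑ i, k i) - 1) : ℕ) : ℚ) / ∏ i, ((Nat.factorial (k i) : ℕ) : ℚ) := by
  set K := ∑ i, k i with hKdef
  have hK : 0 < K := by
    refine Finset.sum_pos (fun i _ => hk i) ⟨⟨0, hn⟩, Finset.mem_univ _⟩
  set c : ℚ := ∏ i, ((Nat.factorial (k i) : ℕ) : ℚ) with hc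
  have hcpos : 0 < c := Finset.prod_pos fun i _ => by positivity
  have hcnat : c = ((∏ i, Nat.factorial (k i) : ℕ) : ℚ) := by push_cast; rfl
  have hPR : P = C c⁻¹ * descPochhammer ℚ K := by
    have hz : P - C c⁻¹ * descPochhammer ℚ K = 0 := by
      apply Polynomial.eq_zero_of_infinite_isRoot
      apply Set.infinite_of_injective_forall_mem (f := fun q : ℕ => (q : ℚ))
        (hi := Nat.cast_injective)
      intro q
      simp only [Set.mem_setOf_eq, IsRoot, eval_sub, eval_mul, eval_C]
      rw [hP q, descPochhammer_eval_eq_descFactorial, ← key_count n k q]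
      rw [hcnat]
      push_cast
      have : ((∏ i, Nat.factorial (k i) : ℕ) : ℚ) ≠ 0 := by rw [← hcnat]; exact hcpos.ne'
      field_simp
      simp

    exact sub_eq_zero.mp hz
  have hcoeff : (descPochhammer ℚ K).coeff 1 = (-1) ^ (K - 1) * (K - 1).factorial := by
    obtain ⟨m, hm⟩ : ∃ m, K = m + 1 := ⟨K - 1, (Nat.succ_pred_eq_of_pos hK).symm⟩
    rw [hm, descPochhammer_succ_left]
    rw [show (1 : ℕ) = 0 + 1 from rfl, coeff_X_mul, coeff_zero_eq_eval_zero, eval_comp,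
      eval_sub, eval_X, eval_one, zero_sub, descPoch_eval_neg_one]
    simp [hm]
  rw [hPR, coeff_C_mul, hcoeff]
  rw [abs_mul, abs_mul, abs_pow, abs_neg, abs_one, one_pow, one_mul, abs_inv,
    abs_of_pos hcpos, abs_of_nonneg (by positivity : (0:ℚ) ≤ ((K-1).factorial : ℚ))]
  rw [inv_mul_eq_div]
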